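/- arXiv:1901.07609 — 9 statements merged into one kernel-verified Lean document; each statement's English description precedes it below -/
import Mathlib

section
/- If v and v' are twins in a graph G (i.e., N[v] = N[v']), then for every minimum-size cluster deletion set S of G, v ∈ S if and only if v' ∈ S. -/
def IsClusterGraph {W : Type*} (H : SimpleGraph W) : Prop :=
  ∀ u w : W, H.Reachable u w → u ≠ w → H.Adj u w

def IsCDS {V : Type*} (G : SimpleGraph V) (S : Set V) : Prop :=
  IsClusterGraph (G.induce {x | x ∉ S})

def IsVC {V : Type*} (H : SimpleGraph V) (X : Set V) : Prop :=
  ∀ u w : V, H.Adj u w → u ∈ X ∨ w ∈ X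

/-- The auxiliary graph `H_v`: vertices of `V` carry it, but all edges lie inside
`N(v) ∪ N²(v)`. Between `N(v)` and `N²(v)` it has the edges of `G`; inside `N(v)`
it has the non-edges of `G`; `N²(v)` is independent. -/
def Hv {V : Type*} (G : SimpleGraph V) (v : V) : SimpleGraph V :=
  SimpleGraph.fromRel (fun u u' =>
    (G.Adj v u ∧ G.Adj v u' ∧ ¬ G.Adj u u') ∨
    (G.Adj v u ∧ G.dist v u' = 2 ∧ G.Adj u u'))

/-- `v` together with all its twins (vertices with the same closed neighborhood). -/
def Twins {V : Type*} (G : SimpleGraph V) (v : V) : Set V :=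
  {v' | insert v' (G.neighborSet v') = insert v (G.neighborSet v)}

/-- Delete a vertex `u` from `H` (keeping it as an isolated vertex). -/
def delVert {V : Type*} (H : SimpleGraph V) (u : V) : SimpleGraph V :=
  SimpleGraph.fromRel (fun a b => H.Adj a b ∧ a ≠ u ∧ b ≠ u)

lemma aux1 {V : Type*} [Fintype V] (G : SimpleGraph V) (v v' : V)
    (htwin : insert v (G.neighborSet v) = insert v' (G.neighborSet v'))
    (S : Set V) (hS : IsCDS G S)
    (hmin : ∀ T : Set V, IsCDS G T → S.ncard ≤ T.ncard)
    (hv : v ∈ S) : v' ∈ S := by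
  classical
  by_contra hv'
  have hne : v ≠ v' := by rintro rfl; exact hv' hv
  have hadj : G.Adj v v' := by
    have : v' ∈ insert v (G.neighborSet v) := by
      rw [htwin]; exact Set.mem_insert _ _
    rcases this with h | h
    · exact absurd h.symm hne
    · exact h
  have hnbr : ∀ u : V, u ≠ v → u ≠ v' → (G.Adj v u ↔ G.Adj v' u) := by
    intro u hu hu'
    constructor
    · intro h
      have : u ∈ insert v' (G.neighborSet v') := by rw [← htwin]; exact Set.mem_insert_of_mem _ h
      rcases this with h2 | h2
      · exact absurd h2 hu'
      · exact h2
    · intro h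
      have : u ∈ insert v (G.neighborSet v) := by rw [htwin]; exact Set.mem_insert_of_mem _ h
      rcases this with h2 | h2
      · exact absurd h2 hu
      · exact h2
  set T : Set V := S \ {v} with hT
  set f : V → V := fun x => if x = v then v' else x with hf
  have hfmem : ∀ x : V, x ∉ T → f x ∉ S := by
    intro x hx
    by_cases h : x = v
    · simp [hf, h, hv']
    · simp only [hf, if_neg h]
      intro hxS
      exact hx ⟨hxS, h⟩
  have hstep : ∀ a b : V, a ∉ T → b ∉ T → G.Adj a b → f a = f b ∨ G.Adj (f a) (f b) := by
    intro a b ha hb hab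
    by_cases hav : a = v
    · have hbv : b ≠ v := fun h => hab.ne (hav.trans h.symm)
      simp only [hf, if_pos hav, if_neg hbv]
      by_cases hbv' : b = v'
      · exact Or.inl hbv'.symm
      · refine Or.inr ((hnbr b hbv hbv').mp ?_)
        rw [← hav]; exact hab
    · by_cases hbv : b = v
      · simp only [hf, if_pos hbv, if_neg hav]
        by_cases hav' : a = v'
        · exact Or.inl hav'
        · refine Or.inr ((hnbr a hav hav').mp ?_).symm
          rw [← hbv]; exact hab.symm
      · simp only [hf, if_neg hav, if_neg hbv]
        exact Or.inr hab
  have hTCDS : IsCDS G T := by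
    intro a b hr hab
    have hreach : ∀ (x y : {x : V | x ∉ T}), (G.induce {x : V | x ∉ T}).Reachable x y →
        (G.induce {x : V | x ∉ S}).Reachable ⟨f x, hfmem x x.2⟩ ⟨f y, hfmem y y.2⟩ := by
      intro x y ⟨w⟩
      induction w with
      | nil => exact SimpleGraph.Reachable.refl _
      | @cons c d e hcd p ih =>
        rcases hstep c d c.2 d.2 hcd with heq | hGadj
        · have : (⟨f c, hfmem c c.2⟩ : {x : V | x ∉ S}) = ⟨f d, hfmem d d.2⟩ := Subtype.ext heq
          rw [this]; exact ih
        · exact (SimpleGraph.Adj.reachable (by exact hGadj :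
            (G.induce {x : V | x ∉ S}).Adj ⟨f c, hfmem c c.2⟩ ⟨f d, hfmem d d.2⟩)).trans ih
    have hKr := hreach a b hr
    -- in the cluster graph K, f a and f b are equal or adjacent
    have hKres : f a = f b ∨ G.Adj (f a) (f b) := by
      by_cases heq : (⟨f a, hfmem a a.2⟩ : {x : V | x ∉ S}) = ⟨f b, hfmem b b.2⟩
      · exact Or.inl (congrArg Subtype.val heq)
      · exact Or.inr (hS _ _ hKr heq)
    -- recover adjacency of a b
    show G.Adj (a : V) b
    have habv : (a : V) ≠ b := fun h => hab (Subtype.ext h)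
    by_cases hav : (a : V) = v
    · have hbv : (b : V) ≠ v := fun h => habv (hav.trans h.symm)
      rcases hKres with heq | hGadj
      · simp only [hf, if_pos hav, if_neg hbv] at heq
        rw [hav, ← heq]; exact hadj
      · simp only [hf, if_pos hav, if_neg hbv] at hGadj
        by_cases hbv' : (b : V) = v'
        · rw [hav, hbv']; exact hadj
        · rw [hav]; exact (hnbr b hbv hbv').mpr hGadj
    · by_cases hbv : (b : V) = v
      · rcases hKres with heq | hGadj
        · simp only [hf, if_neg hav, if_pos hbv] at heq
          rw [hbv, heq]; exact hadj.symm
        · simp only [hf, if_neg hav, if_pos hbv] at hGadj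
          by_cases hav' : (a : V) = v'
          · rw [hav', hbv]; exact hadj.symm
          · rw [hbv]; exact ((hnbr a hav hav').mpr hGadj.symm).symm
      · rcases hKres with heq | hGadj
        · simp only [hf, if_neg hav, if_neg hbv] at heq
          exact absurd heq habv
        · simpa only [hf, if_neg hav, if_neg hbv] using hGadj
  have hlt : T.ncard < S.ncard := Set.ncard_diff_singleton_lt_of_mem hv S.toFinite
  exact absurd (hmin T hTCDS) (not_le.mpr hlt)

/-- Twins belong together to every minimum cluster deletion set. -/
theorem stmt1 {V : Type*} [Fintype V] (G : SimpleGraph V) (v v' : V)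
    (htwin : insert v (G.neighborSet v) = insert v' (G.neighborSet v'))
    (S : Set V) (hS : IsCDS G S)
    (hmin : ∀ T : Set V, IsCDS G T → S.ncard ≤ T.ncard) :
    v ∈ S ↔ v' ∈ S :=
  ⟨fun h => aux1 G v v' htwin S hS hmin h,
   fun h => aux1 G v' v htwin.symm S hS hmin h⟩
end

section
/- If v and v' are twins in G, S is a cluster deletion set of G with v ∈ S and v' ∉ S, then S \ {v} is also a cluster deletion set of G. (In particular, no minimum cluster deletion set separates twins.) -/
/-- If `S` is a cluster deletion set (no induced path on 3 vertices survives),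
`v, v'` are twins, `v ∈ S` and `v' ∉ S`, then `S \ {v}` is also a cluster
deletion set. -/
theorem stmt2 {V : Type*} (G : SimpleGraph V) (v v' : V)
    (htwin : insert v (G.neighborSet v) = insert v' (G.neighborSet v'))
    (S : Set V)
    (hS : ∀ a b c : V, a ∉ S → b ∉ S → c ∉ S →
      G.Adj a b → G.Adj b c → a ≠ c → G.Adj a c)
    (hv : v ∈ S) (hv' : v' ∉ S) :
    ∀ a b c : V, a ∉ S \ {v} → b ∉ S \ {v} → c ∉ S \ {v} →
      G.Adj a b → G.Adj b c → a ≠ c → G.Adj a c := by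
  have hvv' : v ≠ v' := fun h => hv' (h ▸ hv)
  have hadj : G.Adj v v' := by
    have : v' ∈ insert v (G.neighborSet v) := by
      rw [htwin]; exact Set.mem_insert _ _
    rcases this with h | h
    · exact absurd h.symm hvv'
    · exact h
  have htw : ∀ x, x ≠ v → x ≠ v' → (G.Adj v x ↔ G.Adj v' x) := by
    intro x hxv hxv'
    have := Set.ext_iff.mp htwin x
    simp only [Set.mem_insert_iff, SimpleGraph.mem_neighborSet] at this
    constructor
    · intro h; rcases this.mp (Or.inr h) with h' | h'
      · exact absurd h' hxv'
      · exact h'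
    · intro h; rcases this.mpr (Or.inr h) with h' | h'
      · exact absurd h' hxv
      · exact h'
  intro a b c ha hb hc hab hbc hac
  simp only [Set.mem_diff, Set.mem_singleton_iff, not_and, not_not] at ha hb hc
  by_cases hav : a = v
  · subst a
    have hbv : b ≠ v := hab.ne'
    have hcv : c ≠ v := fun h => hac h.symm
    have hbS : b ∉ S := fun h => hbv (hb h)
    have hcS : c ∉ S := fun h => hcv (hc h)
    by_cases hcv' : c = v'
    · exact hcv' ▸ hadj
    · rw [htw c hcv hcv']
      by_cases hbv' : b = v'
      · exact hbv' ▸ hbc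
      · have h1 : G.Adj v' b := (htw b hbv hbv').mp hab
        exact hS v' b c hv' hbS hcS h1 hbc (fun h => hcv' h.symm)
  · by_cases hcv : c = v
    · subst c
      have hbv : b ≠ v := fun h => hbc.ne h
      have haS : a ∉ S := fun h => hav (ha h)
      have hbS : b ∉ S := fun h => hbv (hb h)
      by_cases hav' : a = v'
      · exact hav' ▸ hadj.symm
      · rw [show G.Adj a v ↔ G.Adj v a from ⟨SimpleGraph.Adj.symm, SimpleGraph.Adj.symm⟩,
          htw a hav hav']
        by_cases hbv' : b = v'
        · exact (hbv' ▸ hab).symm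
        · have h1 : G.Adj v' b := (htw b hbv hbv').mp hbc.symm
          exact (hS a b v' haS hbS hv' hab ((h1).symm) (fun h => hav' h)).symm
    · by_cases hbv : b = v
      · subst b
        have haS : a ∉ S := fun h => hav (ha h)
        have hcS : c ∉ S := fun h => hcv (hc h)
        by_cases hav' : a = v'
        · subst a
          by_cases hcv' : c = v'
          · exact absurd hcv'.symm hac
          · exact (htw c hcv hcv').mp hbc
        · by_cases hcv' : c = v'
          · subst c
            exact ((htw a hav hav').mp hab.symm).symm
          · have h1 : G.Adj a v' := ((htw a hav hav').mp hab.symm).symm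
            have h2 : G.Adj v' c := (htw c hcv hcv').mp hbc
            exact hS a v' c haS hv' hcS h1 h2 hac
      · exact hS a b c (fun h => hav (ha h)) (fun h => hbv (hb h)) (fun h => hcv (hc h)) hab hbc hac
end

section
/- A vertex v' ≠ v is an isolated vertex of H_v if and only if v' is a twin of v in G (i.e., N[v] = N[v']). -/
lemma dist_two_mid {V : Type*} {G : SimpleGraph V} {v w : V} (h : G.dist v w = 2) :
    ∃ u, G.Adj v u ∧ G.Adj u w := by
  obtain ⟨p, hp⟩ := SimpleGraph.exists_walk_of_dist_ne_zero (by omega : G.dist v w ≠ 0)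
  rw [h] at hp
  refine ⟨p.getVert 1, ?_, ?_⟩
  · have := p.adj_getVert_succ (by omega : 0 < p.length)
    simpa using this
  · have := p.adj_getVert_succ (by omega : 1 < p.length)
    rw [show (1:ℕ)+1 = p.length by omega, p.getVert_length] at this
    exact this

lemma dist_two_not_adj {V : Type*} {G : SimpleGraph V} {v w : V} (h : G.dist v w = 2) :
    ¬ G.Adj v w := fun ha => by
  rw [← SimpleGraph.dist_eq_one_iff_adj] at ha; omega

/-- A vertex `v' ≠ v` of `H_v` is isolated in `H_v` iff `v'` is a twin of `v`. -/
theorem stmt5 {V : Type*} (G : SimpleGraph V) (v v' : V) (hne : v' ≠ v)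
    (hvert : G.Adj v v' ∨ G.dist v v' = 2) :
    (∀ w : V, ¬ (Hv G v).Adj v' w) ↔
      insert v' (G.neighborSet v') = insert v (G.neighborSet v) := by
  constructor
  · intro hiso
    have hadj : G.Adj v v' := by
      rcases hvert with h | h
      · exact h
      · obtain ⟨u, hvu, huv'⟩ := dist_two_mid h
        refine absurd ?_ (hiso u)
        rw [Hv, SimpleGraph.fromRel_adj]
        exact ⟨fun he => dist_two_not_adj h (by rw [he]; exact hvu), Or.inr (Or.inr ⟨hvu, h, huv'⟩)⟩
    ext x
    simp only [Set.mem_insert_iff, SimpleGraph.mem_neighborSet]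
    constructor
    · rintro (rfl | hx)
      · exact Or.inr hadj
      · by_cases hxv : x = v
        · exact Or.inl hxv
        · refine Or.inr ?_
          by_contra hvx
          have hd : G.dist v x = 2 := by
            have hle : G.dist v x ≤ 2 := by
              have := G.dist_le (SimpleGraph.Walk.cons hadj (SimpleGraph.Walk.cons hx SimpleGraph.Walk.nil))
              simpa using this
            have h0 : G.dist v x ≠ 0 := by
              rw [SimpleGraph.dist_ne_zero_iff_ne_and_reachable]
              exact ⟨Ne.symm hxv, ⟨SimpleGraph.Walk.cons hadj (SimpleGraph.Walk.cons hx SimpleGraph.Walk.nil)⟩⟩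
            have h1 : G.dist v x ≠ 1 := fun h1 =>
              hvx (SimpleGraph.dist_eq_one_iff_adj.mp h1)
            omega
          refine hiso x ?_
          rw [Hv, SimpleGraph.fromRel_adj]
          exact ⟨fun he => G.irrefl (he ▸ hx), Or.inl (Or.inr ⟨hadj, hd, hx⟩)⟩
    · rintro (rfl | hx)
      · exact Or.inr hadj.symm
      · by_cases hxv : x = v'
        · exact Or.inl hxv
        · refine Or.inr ?_
          by_contra hvx
          refine hiso x ?_
          rw [Hv, SimpleGraph.fromRel_adj]
          exact ⟨Ne.symm hxv, Or.inl (Or.inl ⟨hadj, hx, hvx⟩)⟩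
  · intro htw
    have heq : ∀ x, (x = v' ∨ G.Adj v' x) ↔ (x = v ∨ G.Adj v x) := by
      intro x
      have := Set.ext_iff.mp htw x
      simpa [SimpleGraph.mem_neighborSet] using this
    have hadj : G.Adj v v' := by
      rcases (heq v).mpr (Or.inl rfl) with h | h
      · exact absurd h.symm hne
      · exact h.symm
    intro w hw
    rw [Hv, SimpleGraph.fromRel_adj] at hw
    obtain ⟨hnw, h⟩ := hw
    rcases h with (⟨_, hvw, hno⟩ | ⟨_, hd, hvw⟩) | (⟨hvw, _, hno⟩ | ⟨_, hd, _⟩)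
    · rcases (heq w).mpr (Or.inr hvw) with rfl | h
      · exact hnw rfl
      · exact hno h
    · rcases (heq w).mp (Or.inr hvw) with rfl | h
      · simp [SimpleGraph.dist_self] at hd
      · rw [← SimpleGraph.dist_eq_one_iff_adj] at h; omega
    · rcases (heq w).mpr (Or.inr hvw) with rfl | h
      · exact hnw rfl
      · exact hno h.symm
    · exact dist_two_not_adj hd hadj
end

section
/- If X is a vertex cover of H_v, then in the graph G − X, the connected component containing v is a clique. -/
/-- If `X` is a vertex cover of `H_v` with `v ∉ X`, then the connected component of
`v` in `G − X` is a clique. -/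
theorem stmt6 {V : Type*} (G : SimpleGraph V) (v : V) (X : Set V)
    (hX : IsVC (Hv G v) X) (hv : v ∈ {x : V | x ∉ X}) :
    ∀ u w : {x : V // x ∈ {x : V | x ∉ X}},
      (G.induce {x : V | x ∉ X}).Reachable ⟨v, hv⟩ u →
      (G.induce {x : V | x ∉ X}).Reachable ⟨v, hv⟩ w →
      u ≠ w → G.Adj u.1 w.1 := by
  -- key: two surviving neighbors of v are adjacent
  have key : ∀ a b : V, a ∉ X → b ∉ X → G.Adj v a → G.Adj v b → a ≠ b → G.Adj a b := by
    intro a b ha hb hva hvb hab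
    by_contra hnadj
    have : (Hv G v).Adj a b := by
      refine ⟨hab, Or.inl (Or.inl ⟨hva, hvb, hnadj⟩)⟩
    rcases hX a b this with h | h
    · exact ha h
    · exact hb h
  -- any vertex reachable from v is v or a neighbor of v
  have reach : ∀ u : {x : V // x ∈ {x : V | x ∉ X}},
      (G.induce {x : V | x ∉ X}).Reachable ⟨v, hv⟩ u → u.1 = v ∨ G.Adj v u.1 := by
    have aux : ∀ (a z : {x : V // x ∈ {x : V | x ∉ X}})
        (p : (G.induce {x : V | x ∉ X}).Walk a z), z.1 = v → a.1 = v ∨ G.Adj v a.1 := by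
      intro a z p
      induction p with
      | nil => intro h; exact Or.inl h
      | @cons a b _ hadj p ih =>
        intro hz
        rcases ih hz with hb | hb
        · -- b = v, and a adjacent to b in induced graph
          right
          have : G.Adj a.1 b.1 := hadj
          rw [hb] at this
          exact this.symm
        · -- Adj v b and Adj a b
          have hab : G.Adj a.1 b.1 := hadj
          by_cases hav : a.1 = v
          · exact Or.inl hav
          right
          by_contra hnadj
          -- then dist v a = 2
          have hreach : G.Reachable v a.1 :=
            ⟨SimpleGraph.Walk.cons hb (SimpleGraph.Walk.cons hab.symm SimpleGraph.Walk.nil)⟩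
          have hle : G.dist v a.1 ≤ 2 := by
            have := SimpleGraph.dist_le
              (SimpleGraph.Walk.cons hb (SimpleGraph.Walk.cons hab.symm SimpleGraph.Walk.nil))
            simpa using this
          have hpos : 0 < G.dist v a.1 := hreach.pos_dist_of_ne (Ne.symm hav)
          have hne1 : G.dist v a.1 ≠ 1 := fun h =>
            hnadj (SimpleGraph.dist_eq_one_iff_adj.mp h)
          have hdist : G.dist v a.1 = 2 := by omega
          have : (Hv G v).Adj b.1 a.1 :=
            ⟨fun h => (h ▸ hnadj) hb, Or.inl (Or.inr ⟨hb, hdist, hab.symm⟩)⟩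
          rcases hX b.1 a.1 this with h | h
          · exact b.2 h
          · exact a.2 h
    intro u hu
    obtain ⟨p⟩ := hu.symm
    exact aux u ⟨v, hv⟩ p rfl
  intro u w hu hw huw
  have huw' : u.1 ≠ w.1 := fun h => huw (Subtype.ext h)
  rcases reach u hu with h1 | h1 <;> rcases reach w hw with h2 | h2
  · exact absurd (h1.trans h2.symm) huw'
  · rw [h1]; exact h2
  · rw [h2]; exact h1.symm
  · exact key u.1 w.1 u.2 w.2 h1 h2 huw'
end

section
/- Let X be a vertex cover of H_v and let Twins(v) be the set consisting of v and all its twins. Then there exists a minimum-size cluster deletion set S of G such that either v ∉ S or |X \ S| ≥ 1 + |Twins(v)|. -/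
/- ### Auxiliary lemmas -/

private lemma walk_adj {α : Type*} {H : SimpleGraph α}
    (htr : ∀ a b c : α, H.Adj a b → H.Adj b c → a ≠ c → H.Adj a c) :
    ∀ {u w : α}, H.Walk u w → u ≠ w → H.Adj u w := by
  intro u w p
  induction p with
  | nil => intro h; exact absurd rfl h
  | @cons u x w h' p ih =>
    intro hne
    by_cases hxw : x = w
    · exact hxw ▸ h'
    · exact htr _ _ _ h' (ih hxw) hne

private lemma isCDS_iff {V : Type*} (G : SimpleGraph V) (S : Set V) :
    IsCDS G S ↔ ∀ a b c : V, a ∉ S → b ∉ S → c ∉ S →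
      G.Adj a b → G.Adj b c → a ≠ c → G.Adj a c := by
  constructor
  · intro h a b c ha hb hc hab hbc hac
    have hab' : (G.induce {x | x ∉ S}).Adj ⟨a, ha⟩ ⟨b, hb⟩ := by
      simp only [SimpleGraph.comap_adj, Function.Embedding.coe_subtype]
      exact hab
    have hbc' : (G.induce {x | x ∉ S}).Adj ⟨b, hb⟩ ⟨c, hc⟩ := by
      simp only [SimpleGraph.comap_adj, Function.Embedding.coe_subtype]
      exact hbc
    have hr : (G.induce {x | x ∉ S}).Reachable ⟨a, ha⟩ ⟨c, hc⟩ :=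
      hab'.reachable.trans hbc'.reachable
    have := h _ _ hr (by simp [Subtype.ext_iff, hac])
    simpa using this
  · intro h
    intro u w hr hne
    obtain ⟨p⟩ := hr
    refine walk_adj ?_ p hne
    intro a b c hab hbc hac
    simp only [SimpleGraph.comap_adj, Function.Embedding.coe_subtype] at hab hbc ⊢
    exact h a.1 b.1 c.1 a.2 b.2 c.2 hab hbc (fun hh => hac (Subtype.ext hh))

private lemma cds_univ {V : Type*} (G : SimpleGraph V) : IsCDS G (Set.univ : Set V) := by
  intro u w _ _
  exact absurd (Set.mem_univ u.1) u.2

private lemma twins_mem_iff {V : Type*} {G : SimpleGraph V} {v v' : V}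
    (h : v' ∈ Twins G v) (w : V) :
    (w = v' ∨ G.Adj v' w) ↔ (w = v ∨ G.Adj v w) := by
  have := Set.ext_iff.mp h w
  simpa [Set.mem_insert_iff] using this

private lemma twins_subset_closed {V : Type*} {G : SimpleGraph V} {v v' : V}
    (h : v' ∈ Twins G v) : v' = v ∨ G.Adj v v' :=
  (twins_mem_iff h v').mp (Or.inl rfl)

/-- if `a` is a twin of `v` and `b ≠ a` is in the closed neighbourhood of `v`,
then `a` and `b` are adjacent. -/
private lemma twin_adj_closed {V : Type*} {G : SimpleGraph V} {v a b : V}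
    (ha : a ∈ Twins G v) (hb : b = v ∨ G.Adj v b) (hab : a ≠ b) : G.Adj a b := by
  rcases (twins_mem_iff ha b).mpr hb with h | h
  · exact absurd h.symm hab
  · exact h

/-- neighbours of a twin of `v` are in the closed neighbourhood of `v`. -/
private lemma twin_nbhd {V : Type*} {G : SimpleGraph V} {v a c : V}
    (ha : a ∈ Twins G v) (hac : G.Adj a c) : c = v ∨ G.Adj v c :=
  (twins_mem_iff ha c).mp (Or.inr hac)

private lemma twin_swap_adj {V : Type*} [DecidableEq V] {G : SimpleGraph V} {v v' : V}
    (h : v' ∈ Twins G v) {a b : V} (hab : G.Adj a b) :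
    G.Adj (Equiv.swap v v' a) (Equiv.swap v v' b) := by
  have key : ∀ w, (w = v' ∨ G.Adj v' w) ↔ (w = v ∨ G.Adj v w) := twins_mem_iff h
  rcases eq_or_ne a v with rfl | hav
  · rw [Equiv.swap_apply_left]
    rcases eq_or_ne b v' with rfl | hbv'
    · rw [Equiv.swap_apply_right]; exact hab.symm
    · rw [Equiv.swap_apply_of_ne_of_ne hab.ne' hbv']
      rcases (key b).mpr (Or.inr hab) with h1 | h1
      · exact absurd h1 hbv'
      · exact h1
  rcases eq_or_ne a v' with rfl | hav'
  · rw [Equiv.swap_apply_right]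
    rcases eq_or_ne b v with rfl | hbv
    · rw [Equiv.swap_apply_left]; exact hab.symm
    · rw [Equiv.swap_apply_of_ne_of_ne hbv hab.ne']
      rcases (key b).mp (Or.inr hab) with h1 | h1
      · exact absurd h1 hbv
      · exact h1
  rw [Equiv.swap_apply_of_ne_of_ne hav hav']
  rcases eq_or_ne b v with rfl | hbv
  · rw [Equiv.swap_apply_left]
    rcases (key a).mpr (Or.inr hab.symm) with h1 | h1
    · exact absurd h1 hav'
    · exact h1.symm
  rcases eq_or_ne b v' with rfl | hbv'
  · rw [Equiv.swap_apply_right]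
    rcases (key a).mp (Or.inr hab.symm) with h1 | h1
    · exact absurd h1 hav
    · exact h1.symm
  rw [Equiv.swap_apply_of_ne_of_ne hbv hbv']
  exact hab

private lemma dist_eq_two {V : Type*} {G : SimpleGraph V} {v a c : V}
    (hva : G.Adj v a) (hac : G.Adj a c) (hcv : c ≠ v) (hnadj : ¬ G.Adj v c) :
    G.dist v c = 2 := by
  have hle : G.dist v c ≤ 2 := by
    have := SimpleGraph.dist_le (SimpleGraph.Walk.cons hva (SimpleGraph.Walk.cons hac
      SimpleGraph.Walk.nil))
    simpa using this
  have hr : G.Reachable v c := (hva.reachable).trans hac.reachable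
  have h0 : 0 < G.dist v c := hr.pos_dist_of_ne (Ne.symm hcv)
  have h1 : G.dist v c ≠ 1 := fun hh => hnadj (SimpleGraph.dist_eq_one_iff_adj.mp hh)
  omega

/-- For any vertex cover `X` of `H_v` there is a minimum cluster deletion set `S`
with `v ∉ S` or `|X \ S| ≥ 1 + |Twins(v)|`. -/
theorem stmt7 {V : Type*} [Fintype V] (G : SimpleGraph V) (v : V) (X : Set V)
    (hX : IsVC (Hv G v) X) :
    ∃ S : Set V, IsCDS G S ∧ (∀ T : Set V, IsCDS G T → S.ncard ≤ T.ncard) ∧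
      (v ∉ S ∨ 1 + (Twins G v).ncard ≤ (X \ S).ncard) := by
  classical
  -- a minimum cluster deletion set
  obtain ⟨S₀, hS₀, hmin⟩ : ∃ S : Set V, IsCDS G S ∧
      ∀ T : Set V, IsCDS G T → S.ncard ≤ T.ncard := by
    have hne : {n | ∃ S : Set V, IsCDS G S ∧ S.ncard = n}.Nonempty :=
      ⟨_, Set.univ, cds_univ G, rfl⟩
    obtain ⟨S, hS, hcard⟩ := Nat.sInf_mem hne
    exact ⟨S, hS, fun T hT => hcard ▸ Nat.sInf_le ⟨T, hT, rfl⟩⟩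
  by_cases hv : v ∉ S₀
  · exact ⟨S₀, hS₀, hmin, Or.inl hv⟩
  push_neg at hv
  -- if some twin of v avoids S₀, swap it with v
  by_cases htw : ∃ v' ∈ Twins G v, v' ∉ S₀
  · obtain ⟨v', hv'T, hv'S⟩ := htw
    have hvv' : v ≠ v' := fun hh => hv'S (hh ▸ hv)
    set S₁ : Set V := insert v' (S₀ \ {v}) with hS₁def
    have hmem : ∀ a : V, a ∉ S₁ ↔ Equiv.swap v v' a ∉ S₀ := by
      intro a
      rcases eq_or_ne a v with rfl | hav
      · simp [hS₁def, Equiv.swap_apply_left, hv'S, hvv']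
      rcases eq_or_ne a v' with rfl | hav'
      · simp [hS₁def, Equiv.swap_apply_right, hv]
      · simp [hS₁def, Equiv.swap_apply_of_ne_of_ne hav hav', hav, hav']
    have hcds : IsCDS G S₁ := by
      rw [isCDS_iff]
      intro a b c ha hb hc hab hbc hac
      have h1 := (isCDS_iff G S₀).mp hS₀ _ _ _ ((hmem a).mp ha) ((hmem b).mp hb)
        ((hmem c).mp hc) (twin_swap_adj hv'T hab) (twin_swap_adj hv'T hbc)
        (fun hh => hac ((Equiv.swap v v').injective hh))
      have h2 := twin_swap_adj hv'T h1
      simpa using h2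
    have hcard : S₁.ncard = S₀.ncard := by
      have h1 : v' ∉ S₀ \ {v} := fun hh => hv'S hh.1
      have h2 := Set.ncard_diff_singleton_add_one hv S₀.toFinite
      rw [hS₁def, Set.ncard_insert_of_notMem h1 ((S₀.toFinite.diff))]
      omega
    have hvS₁ : v ∉ S₁ := by
      rw [hmem, Equiv.swap_apply_left]; exact hv'S
    exact ⟨S₁, hcds, fun T hT => hcard ▸ hmin T hT, Or.inl hvS₁⟩
  push_neg at htw
  by_cases hbig : 1 + (Twins G v).ncard ≤ (X \ S₀).ncard
  · exact ⟨S₀, hS₀, hmin, Or.inr hbig⟩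
  push_neg at hbig
  have hsmall : (X \ S₀).ncard ≤ (Twins G v).ncard := by omega
  -- main construction
  set T : Set V := Twins G v with hTdef
  have hvT : v ∈ T := rfl
  have hTS : T ⊆ S₀ := htw
  set S₁ : Set V := (S₀ \ T) ∪ (X \ S₀) with hS₁def
  -- membership in the complement of S₁
  have hmem : ∀ a : V, a ∉ S₁ ↔ (a ∈ T ∨ (a ∉ S₀ ∧ a ∉ X)) := by
    intro a
    simp only [hS₁def, Set.mem_union, Set.mem_diff, not_or, not_and, not_not]
    constructor
    · rintro ⟨h1, h2⟩
      by_cases haS : a ∈ S₀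
      · exact Or.inl (by tauto)
      · exact Or.inr ⟨haS, fun hx => haS (h2 hx)⟩
    · rintro (hT | ⟨h1, h2⟩)
      · exact ⟨fun _ => hT, fun _ => hTS hT⟩
      · exact ⟨fun hh => absurd hh h1, fun hx => absurd hx h2⟩
  -- the cluster around v : closed neighbourhood members in complement of S₁
  -- key: members of complement of S₁ in the closed neighbourhood of v
  have hKdesc : ∀ a : V, a ∉ S₁ → (a = v ∨ G.Adj v a) →
      a ∈ T ∨ (G.Adj v a ∧ a ∉ S₀ ∧ a ∉ X) := by
    intro a ha hcl
    rcases (hmem a).mp ha with h | h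
    · exact Or.inl h
    · rcases hcl with rfl | hadj
      · exact absurd hv h.1
      · exact Or.inr ⟨hadj, h⟩
  -- no edge from the cluster of v to outside the closed neighbourhood
  have hnoedge : ∀ a c : V, a ∉ S₁ → c ∉ S₁ → (a = v ∨ G.Adj v a) → G.Adj a c →
      (c = v ∨ G.Adj v c) := by
    intro a c ha hc hcl hac
    by_contra hcon
    push_neg at hcon
    obtain ⟨hcv, hcnadj⟩ := hcon
    rcases hKdesc a ha hcl with haT | ⟨hva, haS, haX⟩
    · exact absurd (twin_nbhd haT hac) (by push_neg; exact ⟨hcv, hcnadj⟩)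
    · -- a ∈ N(v) \ X, c at distance 2 : edge of Hv, covered by X
      have hd2 : G.dist v c = 2 := dist_eq_two hva hac hcv hcnadj
      have hHadj : (Hv G v).Adj a c := by
        rw [Hv, SimpleGraph.fromRel_adj]
        exact ⟨hac.ne, Or.inl (Or.inr ⟨hva, hd2, hac⟩)⟩
      rcases hX a c hHadj with h | h
      · exact haX h
      · rcases (hmem c).mp hc with hcT | hcc
        · rcases twins_subset_closed hcT with h1 | h1
          · exact hcv h1
          · exact hcnadj h1
        · exact hcc.2 h
  -- the cluster is a clique
  have hclique : ∀ a b : V, a ∉ S₁ → b ∉ S₁ → (a = v ∨ G.Adj v a) →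
      (b = v ∨ G.Adj v b) → a ≠ b → G.Adj a b := by
    intro a b ha hb hacl hbcl hab
    rcases hKdesc a ha hacl with haT | ⟨hva, haS, haX⟩
    · exact twin_adj_closed haT hbcl hab
    rcases hKdesc b hb hbcl with hbT | ⟨hvb, hbS, hbX⟩
    · exact (twin_adj_closed hbT hacl hab.symm).symm
    -- both in N(v) \ X : non-edges inside N(v) are edges of Hv
    by_contra hnadj
    have hHadj : (Hv G v).Adj a b := by
      rw [Hv, SimpleGraph.fromRel_adj]
      exact ⟨hab, Or.inl (Or.inl ⟨hva, hvb, hnadj⟩)⟩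
    rcases hX a b hHadj with h | h
    · exact haX h
    · exact hbX h
  -- S₁ is a cluster deletion set
  have hcds : IsCDS G S₁ := by
    rw [isCDS_iff]
    intro a b c ha hb hc hab hbc hac
    by_cases hbcl : b = v ∨ G.Adj v b
    · have hacl := hnoedge b a hb ha hbcl hab.symm
      have hccl := hnoedge b c hb hc hbcl hbc
      exact hclique a c ha hc hacl hccl hac
    ·
      have hbS : b ∉ S₀ := by
        rcases (hmem b).mp hb with hbT | hh
        · exact absurd (twins_subset_closed hbT) hbcl
        · exact hh.1
      have haS : a ∉ S₀ := by
        rcases (hmem a).mp ha with haT | hh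
        · exact absurd (twin_nbhd haT hab) hbcl
        · exact hh.1
      have hcS : c ∉ S₀ := by
        rcases (hmem c).mp hc with hcT | hh
        · exact absurd (twin_nbhd hcT hbc.symm) hbcl
        · exact hh.1
      exact (isCDS_iff G S₀).mp hS₀ a b c haS hbS hcS hab hbc hac
  -- cardinality
  have hcard : S₁.ncard ≤ S₀.ncard := by
    have hdisj : Disjoint (S₀ \ T) (X \ S₀) := by
      rw [Set.disjoint_left]
      rintro x ⟨hx1, _⟩ ⟨_, hx3⟩
      exact hx3 hx1
    have h1 : S₁.ncard = (S₀ \ T).ncard + (X \ S₀).ncard := by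
      rw [hS₁def, Set.ncard_union_eq hdisj (S₀.toFinite.diff) (X.toFinite.diff)]
    have h2 : (S₀ \ T).ncard = S₀.ncard - T.ncard := Set.ncard_diff hTS T.toFinite
    have h3 : T.ncard ≤ S₀.ncard := Set.ncard_le_ncard hTS S₀.toFinite
    omega
  have hvS₁ : v ∉ S₁ := (hmem v).mpr (Or.inl hvT)
  exact ⟨S₁, hcds, fun Tt hTt => le_trans hcard (hmin Tt hTt), Or.inl hvS₁⟩
end

section
/- If |Twins(v)| ≥ vc(H_v), where vc(H_v) is the minimum size of a vertex cover of H_v, then there exists a minimum-size cluster deletion set S of G with v ∉ S. -/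
/-- transfer CDS along a graph automorphism -/
lemma cds_transfer {V : Type*} (G : SimpleGraph V) (σ : Equiv.Perm V)
    (hσ : ∀ a b, G.Adj (σ a) (σ b) ↔ G.Adj a b) (S T : Set V)
    (hST : ∀ x, x ∈ T ↔ σ x ∈ S) (hS : IsCDS G S) : IsCDS G T := by
  intro u w hr hne
  let F : G.induce {x | x ∉ T} →g G.induce {x | x ∉ S} :=
    ⟨fun a => ⟨σ a.1, fun hs => a.2 ((hST a.1).mpr hs)⟩, by
      intro a b hab
      have h1 : G.Adj a.1 b.1 := by simpa using hab
      simpa using (hσ a.1 b.1).mpr h1⟩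
  have hne' : F u ≠ F w := by
    intro hEq
    apply hne
    have : σ u.1 = σ w.1 := congrArg Subtype.val hEq
    exact Subtype.ext (σ.injective this)
  have := hS (F u) (F w) (hr.map F) hne'
  have h2 : G.Adj (σ u.1) (σ w.1) := by simpa [F] using this
  simpa using (hσ u.1 w.1).mp h2

/-- If `|Twins(v)| ≥ vc(H_v)` then some minimum cluster deletion set avoids `v`. -/
theorem stmt8 {V : Type*} [Fintype V] (G : SimpleGraph V) (v : V)
    (h : sInf {n : ℕ | ∃ X : Set V, IsVC (Hv G v) X ∧ X.ncard = n} ≤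
      (Twins G v).ncard) :
    ∃ S : Set V, IsCDS G S ∧ (∀ T : Set V, IsCDS G T → S.ncard ≤ T.ncard) ∧
      v ∉ S := by
  classical
  -- a minimum CDS exists
  have hne : {n : ℕ | ∃ S : Set V, IsCDS G S ∧ S.ncard = n}.Nonempty :=
    ⟨(Set.univ : Set V).ncard, Set.univ, fun u _ _ _ => absurd (Set.mem_univ u.1) u.2, rfl⟩
  obtain ⟨S0, hS0, hS0card⟩ := Nat.sInf_mem hne
  have hmin : ∀ T : Set V, IsCDS G T → S0.ncard ≤ T.ncard := by
    intro T hT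
    rw [hS0card]
    exact Nat.sInf_le ⟨T, hT, rfl⟩
  by_cases hv : v ∈ S0
  · -- twins are in N[v]
    have htwinP : ∀ t ∈ Twins G v, t = v ∨ G.Adj v t := by
      intro t ht
      have : t ∈ insert v (G.neighborSet v) := ht ▸ Set.mem_insert t _
      rcases this with h' | h'
      · exact Or.inl h'
      · exact Or.inr ((SimpleGraph.mem_neighborSet G v t).mp h')
    by_cases htw : ∃ v' ∈ Twins G v, v' ∉ S0
    · -- swap case
      obtain ⟨v', hv't, hv'S⟩ := htw
      have hvv' : v' ≠ v := fun hEq => hv'S (hEq ▸ hv)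
      have hadj : G.Adj v v' := by
        rcases htwinP v' hv't with h' | h'
        · exact absurd h' hvv'
        · exact h'
      have hiff : ∀ a, a ≠ v → a ≠ v' → (G.Adj v a ↔ G.Adj v' a) := by
        intro a hav hav'
        have h1 : a ∈ insert v' (G.neighborSet v') ↔ a ∈ insert v (G.neighborSet v) := by
          rw [hv't]
        simp only [Set.mem_insert_iff, SimpleGraph.mem_neighborSet, hav, hav',
          false_or] at h1
        exact h1.symm
      set σ : Equiv.Perm V := Equiv.swap v v' with hσdef
      have hσv : σ v = v' := Equiv.swap_apply_left v v'
      have hσv' : σ v' = v := Equiv.swap_apply_right v v'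
      have hσo : ∀ a, a ≠ v → a ≠ v' → σ a = a := fun a h1 h2 =>
        Equiv.swap_apply_of_ne_of_ne h1 h2
      have hdir : ∀ a b, G.Adj a b → G.Adj (σ a) (σ b) := by
        intro a b hab
        by_cases ha : a = v
        · subst ha
          by_cases hb : b = v'
          · subst hb; rw [hσv, hσv']; exact hadj.symm
          · rw [hσv, hσo b hab.ne' hb]; exact (hiff b hab.ne' hb).mp hab
        · by_cases ha' : a = v'
          · subst ha'
            by_cases hb : b = v
            · subst hb; rw [hσv', hσv]; exact hadj
            · rw [hσv', hσo b hb hab.ne']; exact (hiff b hb hab.ne').mpr hab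
          · rw [hσo a ha ha']
            by_cases hb : b = v
            · subst hb; rw [hσv]; exact ((hiff a ha ha').mp hab.symm).symm
            · by_cases hb' : b = v'
              · subst hb'; rw [hσv']; exact ((hiff a ha ha').mpr hab.symm).symm
              · rw [hσo b hb hb']; exact hab
      have hσadj : ∀ a b, G.Adj (σ a) (σ b) ↔ G.Adj a b := by
        intro a b
        constructor
        · intro h'
          have := hdir _ _ h'
          simp only [hσdef, Equiv.swap_apply_self] at this
          exact this
        · exact hdir a b
      set S' : Set V := (S0 \ {v}) ∪ {v'} with hS'def
      have hST : ∀ x, x ∈ S' ↔ σ x ∈ S0 := by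
        intro x
        by_cases hx : x = v
        · subst hx
          rw [hσv]
          simp [hS'def, hvv'.symm, hv'S]
        · by_cases hx' : x = v'
          · subst hx'
            rw [hσv']
            simp [hS'def, hv]
          · rw [hσo x hx hx']
            simp [hS'def, hx, hx']
      have hCDS' : IsCDS G S' := cds_transfer G σ hσadj S0 S' hST hS0
      have hcard : S'.ncard = S0.ncard := by
        have : S' = σ ⁻¹' S0 := Set.ext fun x => hST x
        rw [this, ← Equiv.image_symm_eq_preimage]
        exact Set.ncard_image_of_injective S0 σ.symm.injective
      refine ⟨S', hCDS', fun T hT => hcard ▸ hmin T hT, ?_⟩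
      intro hvS'
      rcases hvS' with h' | h'
      · exact h'.2 rfl
      · exact hvv' (Set.mem_singleton_iff.mp h').symm
    · -- VC case
      push_neg at htw
      have htwsub : Twins G v ⊆ S0 := htw
      -- get a minimum vertex cover
      have hvcne : {n : ℕ | ∃ X : Set V, IsVC (Hv G v) X ∧ X.ncard = n}.Nonempty :=
        ⟨(Set.univ : Set V).ncard, Set.univ, fun u w _ => Or.inl (Set.mem_univ u), rfl⟩
      obtain ⟨X, hX, hXcard⟩ := Nat.sInf_mem hvcne
      have hXle : X.ncard ≤ (Twins G v).ncard := hXcard ▸ h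
      set S' : Set V := (S0 \ Twins G v) ∪ (X \ {v}) with hS'def
      have hvS' : v ∉ S' := by
        intro h'
        rcases h' with h' | h'
        · exact h'.2 (show v ∈ Twins G v from rfl)
        · exact h'.2 rfl
      -- membership helpers
      have hXmem : ∀ a, a ∉ S' → a ≠ v → a ∉ X := by
        intro a haS' hav haX
        exact haS' (Or.inr ⟨haX, hav⟩)
      set P : V → Prop := fun x => x = v ∨ G.Adj v x with hPdef
      have hF1 : ∀ a b, a ∉ S' → b ∉ S' → P a → P b → a ≠ b → G.Adj a b := by
        intro a b haS hbS hPa hPb hab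
        rcases show a = v ∨ G.Adj v a from hPa with ha | ha
        · rcases show b = v ∨ G.Adj v b from hPb with hb | hb
          · exact absurd (ha.trans hb.symm) hab
          · exact ha ▸ hb
        · rcases show b = v ∨ G.Adj v b from hPb with hb | hb
          · subst hb; exact ha.symm
          · by_contra hnadj
            have hHv : (Hv G v).Adj a b := by
              rw [Hv, SimpleGraph.fromRel_adj]
              exact ⟨hab, Or.inl (Or.inl ⟨ha, hb, hnadj⟩)⟩
            rcases hX a b hHv with h' | h'
            · exact hXmem a haS ha.ne' h'
            · exact hXmem b hbS hb.ne' h'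
      have hF2 : ∀ a b, a ∉ S' → b ∉ S' → G.Adj a b → P a → P b := by
        intro a b haS hbS hab hPa
        rcases show a = v ∨ G.Adj v a from hPa with ha | ha
        · exact Or.inr (ha ▸ hab)
        · by_contra hPb
          have hbv : b ≠ v := fun hEq => hPb (Or.inl hEq)
          have hnvb : ¬ G.Adj v b := fun hx => hPb (Or.inr hx)
          have hdist : G.dist v b = 2 := by
            have hw : G.dist v b ≤ 2 := by
              have := SimpleGraph.dist_le (SimpleGraph.Walk.cons ha
                (SimpleGraph.Walk.cons hab SimpleGraph.Walk.nil))
              simpa using this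
            have h0 : G.dist v b ≠ 0 := by
              intro heq
              rcases SimpleGraph.dist_eq_zero_iff_eq_or_not_reachable.mp heq with h' | h'
              · exact hbv h'.symm
              · exact h' ⟨SimpleGraph.Walk.cons ha
                  (SimpleGraph.Walk.cons hab SimpleGraph.Walk.nil)⟩
            have h1 : G.dist v b ≠ 1 := fun heq =>
              hnvb (SimpleGraph.dist_eq_one_iff_adj.mp heq)
            omega
          have hHv : (Hv G v).Adj a b := by
            rw [Hv, SimpleGraph.fromRel_adj]
            exact ⟨hab.ne, Or.inl (Or.inr ⟨ha, hdist, hab⟩)⟩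
          rcases hX a b hHv with h' | h'
          · exact hXmem a haS ha.ne' h'
          · exact hXmem b hbS (fun hEq => hbv hEq) h'
      have hF3 : ∀ x, x ∉ S' → ¬ P x → x ∉ S0 := by
        intro x hxS' hPx hxS0
        by_cases hxt : x ∈ Twins G v
        · exact hPx (htwinP x hxt)
        · exact hxS' (Or.inl ⟨hxS0, hxt⟩)
      have hCDS' : IsCDS G S' := by
        intro u w hr hnuw
        -- walk invariant : P is preserved along walks
        have hW1 : ∀ (a b : {x | x ∉ S'}) (p : (G.induce {x | x ∉ S'}).Walk a b),
            P a.1 → P b.1 := by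
          intro a b p
          induction p with
          | nil => exact id
          | @cons x y z hadj q ih =>
            intro hPa
            have hxy : G.Adj x.1 y.1 := by simpa using hadj
            exact ih (hF2 x.1 y.1 x.2 y.2 hxy hPa)
        have hW1' : ∀ (a b : {x | x ∉ S'}) (p : (G.induce {x | x ∉ S'}).Walk a b),
            ¬ P a.1 → ¬ P b.1 := by
          intro a b p hna hPb
          exact hna (hW1 b a p.reverse hPb)
        have hW2 : ∀ (a b : {x | x ∉ S'}) (p : (G.induce {x | x ∉ S'}).Walk a b),
            ¬ P a.1 → ∀ (ha : a.1 ∉ S0) (hb : b.1 ∉ S0),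
            (G.induce {x | x ∉ S0}).Reachable ⟨a.1, ha⟩ ⟨b.1, hb⟩ := by
          intro a b p
          induction p with
          | nil => intro _ ha hb; rfl
          | @cons x y z hadj q ih =>
            intro hPa ha hb
            have hxy : G.Adj x.1 y.1 := by simpa using hadj
            have hPy : ¬ P y.1 := fun hPy => hPa (hF2 y.1 x.1 y.2 x.2 hxy.symm hPy)
            have hy : y.1 ∉ S0 := hF3 y.1 y.2 hPy
            have hstep : (G.induce {x | x ∉ S0}).Adj ⟨x.1, ha⟩ ⟨y.1, hy⟩ := by
              simpa using hxy
            exact hstep.reachable.trans (ih hPy hy hb)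
        obtain ⟨p⟩ := hr
        have hcne : u.1 ≠ w.1 := fun hEq => hnuw (Subtype.ext hEq)
        by_cases hPu : P u.1
        · have hPw : P w.1 := hW1 u w p hPu
          have := hF1 u.1 w.1 u.2 w.2 hPu hPw hcne
          simpa using this
        · have hPw : ¬ P w.1 := hW1' u w p hPu
          have hu0 : u.1 ∉ S0 := hF3 u.1 u.2 hPu
          have hw0 : w.1 ∉ S0 := hF3 w.1 w.2 hPw
          have hreach := hW2 u w p hPu hu0 hw0
          have hne2 : (⟨u.1, hu0⟩ : {x | x ∉ S0}) ≠ ⟨w.1, hw0⟩ := by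
            intro hEq
            exact hcne (Subtype.mk_eq_mk.mp hEq)
          have := hS0 ⟨u.1, hu0⟩ ⟨w.1, hw0⟩ hreach hne2
          simpa using this
      -- cardinality
      have hcard : S'.ncard ≤ S0.ncard := by
        have h1 : S'.ncard ≤ (S0 \ Twins G v).ncard + (X \ {v}).ncard :=
          Set.ncard_union_le _ _
        have h2 : (S0 \ Twins G v).ncard = S0.ncard - (Twins G v).ncard :=
          Set.ncard_diff htwsub
        have h3 : (X \ {v}).ncard ≤ X.ncard := Set.ncard_le_ncard Set.diff_subset X.toFinite
        have h4 : (Twins G v).ncard ≤ S0.ncard := Set.ncard_le_ncard htwsub S0.toFinite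
        omega
      exact ⟨S', hCDS', fun T hT => le_trans hcard (hmin T hT), hvS'⟩
  · exact ⟨S0, hS0, hmin, hv⟩
end

section
/- Let v be a vertex of maximum degree in G and suppose H_v has maximum degree 3, achieved by a vertex u such that H_v − u is a skein (a disjoint union of seagulls—2-stars with center in N(v) and leaves in N²(v)—and isolated vertices) containing at least one seagull. Then a contradiction follows; i.e., no such configuration exists. -/
/-- A seagull in `H` (relative to `G`, `v`): a connected component that is a 2-star
with center `c ∈ N(v)` and leaves `a, b ∈ N²(v)`. -/
def Seagull {V : Type*} (G : SimpleGraph V) (v : V) (H : SimpleGraph V)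
    (c a b : V) : Prop :=
  G.Adj v c ∧ G.dist v a = 2 ∧ G.dist v b = 2 ∧ a ≠ b ∧
    H.neighborSet c = {a, b} ∧ H.neighborSet a = {c} ∧ H.neighborSet b = {c}

/-- If `v` has maximum degree in `G`, and `u` is a vertex of maximum degree 3 in
`H_v` such that `H_v − u` is a skein containing at least one seagull, then we get a
contradiction: no such configuration exists. -/
theorem stmt9 {V : Type*} [Fintype V] (G : SimpleGraph V) (v u : V)
    (hmax : ∀ w : V, (G.neighborSet w).ncard ≤ (G.neighborSet v).ncard)
    (hu3 : ((Hv G v).neighborSet u).ncard = 3)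
    (humax : ∀ w : V, ((Hv G v).neighborSet w).ncard ≤ 3)
    (hskein : ∀ x : V, x ≠ u →
      (delVert (Hv G v) u).neighborSet x = ∅ ∨
      ∃ c a b : V, Seagull G v (delVert (Hv G v) u) c a b ∧
        (x = c ∨ x = a ∨ x = b))
    (hseagull : ∃ c a b : V, Seagull G v (delVert (Hv G v) u) c a b) :
    False := by
  classical
  obtain ⟨c, a, b, hvc, hda, hdb, hab, hc, -, -⟩ := hseagull
  -- v is not adjacent to a or b, and a, b ≠ v
  have hva : ¬ G.Adj v a := fun h => by
    have := (SimpleGraph.dist_eq_one_iff_adj).2 h; omega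
  have hvb : ¬ G.Adj v b := fun h => by
    have := (SimpleGraph.dist_eq_one_iff_adj).2 h; omega
  have hav : a ≠ v := fun h => by subst h; simp [SimpleGraph.dist_self] at hda
  have hbv : b ≠ v := fun h => by subst h; simp [SimpleGraph.dist_self] at hdb
  -- delVert adjacencies from the seagull
  have hca' : (delVert (Hv G v) u).Adj c a := by
    have : a ∈ (delVert (Hv G v) u).neighborSet c := by rw [hc]; simp
    exact this
  have hcb' : (delVert (Hv G v) u).Adj c b := by
    have : b ∈ (delVert (Hv G v) u).neighborSet c := by rw [hc]; simp
    exact this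
  -- unpack delVert
  have key : ∀ x y : V, (delVert (Hv G v) u).Adj x y →
      (Hv G v).Adj x y ∧ x ≠ u ∧ y ≠ u := by
    intro x y h
    rw [delVert, SimpleGraph.fromRel_adj] at h
    obtain ⟨-, h | h⟩ := h
    · exact ⟨h.1, h.2⟩
    · exact ⟨h.1.symm, h.2.2, h.2.1⟩
  obtain ⟨hHca, hcu, hau⟩ := key _ _ hca'
  obtain ⟨hHcb, -, hbu⟩ := key _ _ hcb'
  -- G-adjacency of c with a, b
  have hGkey : ∀ x : V, ¬ G.Adj v x → (Hv G v).Adj c x → G.Adj c x := by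
    intro x hvx h
    rw [Hv, SimpleGraph.fromRel_adj] at h
    obtain ⟨-, h | h⟩ := h
    · rcases h with ⟨-, h, -⟩ | ⟨-, -, h⟩
      · exact absurd h hvx
      · exact h
    · rcases h with ⟨h, -, -⟩ | ⟨h, -, -⟩ <;> exact absurd h hvx
  have hGca : G.Adj c a := hGkey a hva hHca
  have hGcb : G.Adj c b := hGkey b hvb hHcb
  -- the two sets
  set A : Set V := G.neighborSet v ∩ G.neighborSet c with hA
  set B : Set V := {w | G.Adj v w ∧ w ≠ c ∧ ¬ G.Adj c w} with hB
  -- B ⊆ {u}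
  have hBu : B ⊆ {u} := by
    intro w ⟨hvw, hwc, hncw⟩
    by_contra hwu
    simp only [Set.mem_singleton_iff] at hwu
    have hH : (Hv G v).Adj c w := by
      rw [Hv, SimpleGraph.fromRel_adj]
      exact ⟨fun h => hwc (h.symm), Or.inl (Or.inl ⟨hvc, hvw, hncw⟩)⟩
    have hd : (delVert (Hv G v) u).Adj c w := by
      rw [delVert, SimpleGraph.fromRel_adj]
      exact ⟨hH.ne, Or.inl ⟨hH, hcu, hwu⟩⟩
    have : w ∈ ({a, b} : Set V) := by rw [← hc]; exact hd
    rcases this with h | h <;> subst h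
    · exact hva hvw
    · exact hvb hvw
  -- partition of N(v)
  have hpart : G.neighborSet v = A ∪ (B ∪ {c}) := by
    ext w
    simp only [Set.mem_union, Set.mem_singleton_iff, hA, hB, Set.mem_inter_iff,
      Set.mem_setOf_eq, SimpleGraph.mem_neighborSet]
    constructor
    · intro h
      by_cases hw : w = c
      · exact Or.inr (Or.inr hw)
      · by_cases hcw : G.Adj c w
        · exact Or.inl ⟨h, hcw⟩
        · exact Or.inr (Or.inl ⟨h, hw, hcw⟩)
    · rintro (⟨h, -⟩ | ⟨h, -, -⟩ | rfl)
      · exact h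
      · exact h
      · exact hvc
  have hdisj1 : Disjoint A (B ∪ {c}) := by
    rw [Set.disjoint_left]
    rintro w ⟨-, hw2⟩ (⟨-, -, h⟩ | h)
    · exact h hw2
    · simp only [Set.mem_singleton_iff] at h; subst h
      exact G.irrefl hw2
  have hdisj2 : Disjoint B ({c} : Set V) := by
    rw [Set.disjoint_left]
    rintro w ⟨-, h, -⟩ hw
    exact h hw
  have hNv : (G.neighborSet v).ncard = A.ncard + (B.ncard + 1) := by
    rw [hpart, Set.ncard_union_eq hdisj1 (Set.toFinite _) (Set.toFinite _),
      Set.ncard_union_eq hdisj2 (Set.toFinite _) (Set.toFinite _), Set.ncard_singleton]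
  have hBcard : B.ncard ≤ 1 := by
    calc B.ncard ≤ ({u} : Set V).ncard := Set.ncard_le_ncard hBu (Set.toFinite _)
    _ = 1 := Set.ncard_singleton u
  -- lower bound on deg c
  have hsub : ({v, a, b} : Set V) ∪ A ⊆ G.neighborSet c := by
    rintro w (h | ⟨-, h⟩)
    · rcases h with rfl | rfl | h
      · exact hvc.symm
      · exact hGca
      · simp only [Set.mem_singleton_iff] at h; subst h; exact hGcb
    · exact h
  have hdisj3 : Disjoint ({v, a, b} : Set V) A := by
    rw [Set.disjoint_left]
    rintro w (rfl | rfl | h) ⟨h1, -⟩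
    · exact G.irrefl h1
    · exact hva h1
    · simp only [Set.mem_singleton_iff] at h; subst h; exact hvb h1
  have h3 : ({v, a, b} : Set V).ncard = 3 := by
    rw [Set.ncard_insert_of_notMem (by simp [hav.symm, hbv.symm]) (Set.toFinite _),
      Set.ncard_insert_of_notMem (by simp [hab]) (Set.toFinite _), Set.ncard_singleton]
  have hdegc : 3 + A.ncard ≤ (G.neighborSet c).ncard := by
    calc 3 + A.ncard = (({v, a, b} : Set V) ∪ A).ncard := by
          rw [Set.ncard_union_eq hdisj3 (Set.toFinite _) (Set.toFinite _), h3]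
    _ ≤ (G.neighborSet c).ncard := Set.ncard_le_ncard hsub (Set.toFinite _)
  have := hmax c
  omega
end

section
/- Suppose vc(H_v) = 2, H_v has a vertex u of degree 3 which is of maximum degree in H_v, and H_v − u is a 3-star. If v has maximum degree in G and H_v has no degree-1 vertex in N(v) (in H_v − u after deleting u, every vertex of N(v) has degree ≠ 1), then a contradiction follows: the center of the 3-star must lie in N(v) with at least 3 neighbors in N²(v), violating the property that a vertex of N(v) with s neighbors in N²(v) has at least s neighbors in N(v). -/
lemma leaf_info {V : Type*} (G : SimpleGraph V) (v c x : V)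
    (hvx : ¬ G.Adj v x) (h : (Hv G v).Adj c x) :
    G.Adj v c ∧ G.dist v x = 2 ∧ G.Adj c x := by
  rw [Hv, SimpleGraph.fromRel_adj] at h
  rcases h with ⟨hne, h | h⟩ <;> tauto

lemma delVert_adj {V : Type*} (H : SimpleGraph V) (u x y : V)
    (h : (delVert H u).Adj x y) : H.Adj x y ∧ x ≠ u ∧ y ≠ u := by
  rw [delVert, SimpleGraph.fromRel_adj] at h
  rcases h with ⟨hne, h | h⟩
  · exact h
  · exact ⟨h.1.symm, h.2.2, h.2.1⟩

/-- Case 3 of the analysis cannot occur: if `v` has maximum degree in `G`,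
`vc(H_v) = 2`, `u` has maximum degree 3 in `H_v`, `H_v − u` is a 3-star (with
center `c` and leaves `a, b, d`), and no vertex of `N(v)` has degree 1 in
`H_v − u`, then we get a contradiction. -/
theorem stmt11 {V : Type*} [Fintype V] (G : SimpleGraph V) (v u c a b d : V)
    (hmax : ∀ w : V, (G.neighborSet w).ncard ≤ (G.neighborSet v).ncard)
    (hvc : sInf {n : ℕ | ∃ X : Set V, IsVC (Hv G v) X ∧ X.ncard = n} = 2)
    (hu3 : ((Hv G v).neighborSet u).ncard = 3)
    (humax : ∀ w : V, ((Hv G v).neighborSet w).ncard ≤ 3)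
    (hab : a ≠ b) (had : a ≠ d) (hbd : b ≠ d)
    (hstar : ∀ x y : V, (delVert (Hv G v) u).Adj x y ↔
      ((x = c ∧ (y = a ∨ y = b ∨ y = d)) ∨ (y = c ∧ (x = a ∨ x = b ∨ x = d))))
    (hdeg1 : ∀ x : V, G.Adj v x →
      ((delVert (Hv G v) u).neighborSet x).ncard ≠ 1) :
    False := by
  have hca : (delVert (Hv G v) u).Adj c a := (hstar c a).2 (Or.inl ⟨rfl, Or.inl rfl⟩)
  have hcb : (delVert (Hv G v) u).Adj c b :=
    (hstar c b).2 (Or.inl ⟨rfl, Or.inr (Or.inl rfl)⟩)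
  have hcd : (delVert (Hv G v) u).Adj c d :=
    (hstar c d).2 (Or.inl ⟨rfl, Or.inr (Or.inr rfl)⟩)
  have hac : a ≠ c := hca.ne'
  have hbc : b ≠ c := hcb.ne'
  have hdc : d ≠ c := hcd.ne'
  -- each leaf has neighborSet {c} in delVert
  have hleaf : ∀ x : V, x ≠ c → (x = a ∨ x = b ∨ x = d) →
      (delVert (Hv G v) u).neighborSet x = {c} := by
    intro x hxc hx
    ext y
    simp only [SimpleGraph.mem_neighborSet, hstar, Set.mem_singleton_iff]
    constructor
    · rintro (⟨rfl, _⟩ | ⟨rfl, _⟩)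
      · exact absurd rfl hxc
      · rfl
    · rintro rfl; exact Or.inr ⟨rfl, hx⟩
  -- leaves are not in N(v)
  have hnotN : ∀ x : V, x ≠ c → (x = a ∨ x = b ∨ x = d) → ¬ G.Adj v x := by
    intro x hxc hx hvx
    exact hdeg1 x hvx (by rw [hleaf x hxc hx]; simp)
  have hva : ¬ G.Adj v a := hnotN a hac (Or.inl rfl)
  have hvb : ¬ G.Adj v b := hnotN b hbc (Or.inr (Or.inl rfl))
  have hvd : ¬ G.Adj v d := hnotN d hdc (Or.inr (Or.inr rfl))
  have ha := leaf_info G v c a hva (delVert_adj _ _ _ _ hca).1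
  have hb := leaf_info G v c b hvb (delVert_adj _ _ _ _ hcb).1
  have hd := leaf_info G v c d hvd (delVert_adj _ _ _ _ hcd).1
  have hvc' : G.Adj v c := ha.1
  have hav : a ≠ v := fun h => by rw [h, G.dist_self] at ha; exact two_ne_zero ha.2.1.symm
  have hbv : b ≠ v := fun h => by rw [h, G.dist_self] at hb; exact two_ne_zero hb.2.1.symm
  have hdv : d ≠ v := fun h => by rw [h, G.dist_self] at hd; exact two_ne_zero hd.2.1.symm
  -- Hv-neighbors of c include a, b, d
  have hHa : (Hv G v).Adj c a := (delVert_adj _ _ _ _ hca).1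
  have hHb : (Hv G v).Adj c b := (delVert_adj _ _ _ _ hcb).1
  have hHd : (Hv G v).Adj c d := (delVert_adj _ _ _ _ hcd).1
  -- c is G-adjacent to every other vertex of N(v)
  have hallN : ∀ w : V, G.Adj v w → w ≠ c → G.Adj c w := by
    intro w hvw hwc
    by_contra hn
    have hHw : (Hv G v).Adj c w := by
      rw [Hv, SimpleGraph.fromRel_adj]
      exact ⟨fun h => hwc h.symm, Or.inl (Or.inl ⟨hvc', hvw, hn⟩)⟩
    have hwa : w ≠ a := fun h => hva (h ▸ hvw)
    have hwb : w ≠ b := fun h => hvb (h ▸ hvw)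
    have hwd : w ≠ d := fun h => hvd (h ▸ hvw)
    have hsub : ({w, a, b, d} : Set V) ⊆ (Hv G v).neighborSet c := by
      intro x hx
      rcases hx with rfl | rfl | rfl | rfl
      exacts [hHw, hHa, hHb, hHd]
    have h4 : ({w, a, b, d} : Set V).ncard = 4 := by
      rw [Set.ncard_insert_of_notMem (by simp [hwa, hwb, hwd]) (Set.toFinite _),
        Set.ncard_insert_of_notMem (by simp [hab, had]) (Set.toFinite _),
        Set.ncard_insert_of_notMem (by simp [hbd]) (Set.toFinite _),
        Set.ncard_singleton]
    have := Set.ncard_le_ncard hsub (Set.toFinite _)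
    rw [h4] at this
    exact absurd (this.trans (humax c)) (by norm_num)
  -- now count G-neighbors of c
  set S : Set V := insert a (insert b (insert d (insert v (G.neighborSet v \ {c})))) with hS
  have hsub : S ⊆ G.neighborSet c := by
    intro x hx
    rcases hx with rfl | rfl | rfl | rfl | ⟨hx1, hx2⟩
    · exact ha.2.2
    · exact hb.2.2
    · exact hd.2.2
    · exact hvc'.symm
    · exact hallN x hx1 hx2
  have hvnot : v ∉ G.neighborSet v \ {c} := fun h => G.irrefl h.1
  have hcard : S.ncard = (G.neighborSet v).ncard + 3 := by
    have h0 : (G.neighborSet v \ {c}).ncard + 1 = (G.neighborSet v).ncard :=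
      Set.ncard_diff_singleton_add_one hvc' (Set.toFinite _)
    have hdn : d ∉ insert v (G.neighborSet v \ {c}) := by
      simp only [Set.mem_insert_iff, Set.mem_diff]
      rintro (rfl | ⟨h1, _⟩)
      · exact hdv rfl
      · exact hvd h1
    have hbn : b ∉ insert d (insert v (G.neighborSet v \ {c})) := by
      simp only [Set.mem_insert_iff, Set.mem_diff]
      rintro (rfl | rfl | ⟨h1, _⟩)
      · exact hbd rfl
      · exact hbv rfl
      · exact hvb h1
    have han : a ∉ insert b (insert d (insert v (G.neighborSet v \ {c}))) := by
      simp only [Set.mem_insert_iff, Set.mem_diff]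
      rintro (rfl | rfl | rfl | ⟨h1, _⟩)
      · exact hab rfl
      · exact had rfl
      · exact hav rfl
      · exact hva h1
    rw [hS, Set.ncard_insert_of_notMem han (Set.toFinite _),
      Set.ncard_insert_of_notMem hbn (Set.toFinite _),
      Set.ncard_insert_of_notMem hdn (Set.toFinite _),
      Set.ncard_insert_of_notMem hvnot (Set.toFinite _)]
    omega
  have h1 := Set.ncard_le_ncard hsub (Set.toFinite _)
  have h2 := hmax c
  omega
end

section
/- If H is a graph with vc(H) = 2 and u is a vertex of degree 3 such that H − u also contains a vertex u' of degree 3, then H − u consists of a 3-star centered at u' (possibly together with isolated vertices). -/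
/-- If `vc(H) = 2`, `u` has degree 3 in `H`, and `u' ≠ u` has degree 3 in `H − u`,
then `H − u` consists of a 3-star centered at `u'` (plus isolated vertices), i.e.
every edge of `H − u` is incident to `u'`. -/
theorem stmt16 {V : Type*} [Fintype V] (H : SimpleGraph V) (u u' : V)
    (hne : u' ≠ u)
    (hvc : sInf {n : ℕ | ∃ X : Set V, IsVC H X ∧ X.ncard = n} = 2)
    (hd : (H.neighborSet u).ncard = 3)
    (hd' : ((delVert H u).neighborSet u').ncard = 3) :
    ∀ x y : V, (delVert H u).Adj x y → x = u' ∨ y = u' := by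
  have hS : ({n : ℕ | ∃ X : Set V, IsVC H X ∧ X.ncard = n}).Nonempty := by
    by_contra h
    rw [Set.not_nonempty_iff_eq_empty] at h
    rw [h, Nat.sInf_empty] at hvc
    omega
  have h2 : 2 ∈ {n : ℕ | ∃ X : Set V, IsVC H X ∧ X.ncard = n} := hvc ▸ Nat.sInf_mem hS
  obtain ⟨X, hX, hXcard⟩ := h2
  have hXfin : X.Finite := Set.toFinite X
  have huX : u ∈ X := by
    by_contra hu
    have hsub : H.neighborSet u ⊆ X := by
      intro w hw
      rcases hX u w hw with h | h
      · exact absurd h hu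
      · exact h
    have := Set.ncard_le_ncard hsub hXfin
    omega
  have hadj : ∀ a b : V, (delVert H u).Adj a b → H.Adj a b ∧ a ≠ u ∧ b ≠ u := by
    intro a b hab
    rcases hab.2 with ⟨h1, h2, h3⟩ | ⟨h1, h2, h3⟩
    · exact ⟨h1, h2, h3⟩
    · exact ⟨h1.symm, h3, h2⟩
  have hu'X : u' ∈ X := by
    by_contra hu'
    have hsub : (delVert H u).neighborSet u' ⊆ X := by
      intro w hw
      obtain ⟨h1, _, _⟩ := hadj u' w hw
      rcases hX u' w h1 with h | h
      · exact absurd h hu'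
      · exact h
    have := Set.ncard_le_ncard hsub hXfin
    omega
  have hXeq : X = {u, u'} := by
    have hsub : ({u, u'} : Set V) ⊆ X := by
      intro x hx
      rcases hx with rfl | rfl
      · exact huX
      · exact hu'X
    have hc : ({u, u'} : Set V).ncard = 2 := by
      rw [Set.ncard_pair (Ne.symm hne)]
    symm
    exact Set.eq_of_subset_of_ncard_le hsub (by omega) hXfin
  intro x y hxy
  obtain ⟨h1, hx, hy⟩ := hadj x y hxy
  rcases hX x y h1 with h | h
  · rw [hXeq] at h
    rcases h with rfl | rfl
    · exact absurd rfl hx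
    · exact Or.inl rfl
  · rw [hXeq] at h
    rcases h with rfl | rfl
    · exact absurd rfl hy
    · exact Or.inr rfl
end
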